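/- Let d ≥ 1, δ > 0, and let k: S^{d-1} → [0,∞) be measurable and bounded with k(ξ) = k(-ξ) for all ξ, and suppose there is a nonempty open subset I ⊆ S^{d-1} with k(ξ) ≥ δ for all ξ ∈ I. Let γ:(0,∞)→[0,∞) be measurable with ∫_{{|z| > s}} γ(|z|) dz < ∞ for every s > 0, and let m: ℝ^d × (ℝ^d \ {0}) → [0,∞) be measurable with k(h/|h|) γ(|h|) ≤ m(x,h) ≤ γ(|h|) for all x ∈ ℝ^d and h ≠ 0. Then there is a constant c > 0 (depending only on d, δ and I) such that for every x₀ ∈ ℝ^d and every r > 0: ∫_{{z : |z - x₀| ≥ r}} m(x₀, z - x₀) dz ≥ c ∫_{{z : |z| ≥ r}} γ(|z|) dz. -/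

import Mathlib

open MeasureTheory Topology Filter Set Metric
open scoped Pointwise ENNReal

namespace Stmt18Aux

variable {d : ℕ}

local notation "E" => EuclideanSpace ℝ (Fin d)

lemma normalize_mem_sphere {x : E} (hx : x ≠ 0) : ‖x‖⁻¹ • x ∈ sphere (0 : E) 1 := by
  rw [mem_sphere_zero_iff_norm, norm_smul, norm_inv, norm_norm,
    inv_mul_cancel₀ (norm_ne_zero_iff.2 hx)]

def cone (J : Set E) : Set E := {y : E | y ≠ 0 ∧ ‖y‖⁻¹ • y ∈ J}

lemma measurable_normalize : Measurable (fun y : E => ‖y‖⁻¹ • y) :=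
  (measurable_norm.inv).smul measurable_id

lemma cone_measurableSet {J : Set E} (hJ : MeasurableSet J) : MeasurableSet (cone J) :=
  ((measurableSet_singleton (0:E)).compl).inter (measurable_normalize hJ)

lemma polar (hd : 1 ≤ d) (J : Set E) (hJ : MeasurableSet J) (G : ℝ → ℝ≥0∞) (hG : Measurable G) :
    ∫⁻ x, (cone J).indicator (fun y => G ‖y‖) x =
      volume.toSphere ((↑) ⁻¹' J : Set (sphere (0 : E) 1)) *
        ∫⁻ t : Ioi (0:ℝ), G t.1 ∂(Measure.volumeIoiPow (Module.finrank ℝ E - 1)) := by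
  haveI : Nontrivial E := Module.nontrivial_of_finrank_pos (R := ℝ)
    (by rw [finrank_euclideanSpace_fin]; exact hd)
  have hS : MeasurableSet ((↑) ⁻¹' J : Set (sphere (0 : E) 1)) :=
    measurable_subtype_coe hJ
  set g : sphere (0 : E) 1 × Ioi (0:ℝ) → ℝ≥0∞ :=
    fun p => ((↑) ⁻¹' J : Set (sphere (0 : E) 1)).indicator 1 p.1 * G p.2.1 with hg_def
  have hg : Measurable g :=
    ((measurable_one.indicator hS).comp measurable_fst).mul
      (hG.comp (measurable_subtype_coe.comp measurable_snd))
  calc ∫⁻ x, (cone J).indicator (fun y => G ‖y‖) x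
      = ∫⁻ x in ({0}ᶜ : Set E), (cone J).indicator (fun y => G ‖y‖) x := by
        rw [MeasureTheory.restrict_compl_singleton]
    _ = ∫⁻ x : ({0}ᶜ : Set E), (cone J).indicator (fun y => G ‖y‖) x.1
          ∂((volume : Measure E).comap (↑)) := by
        rw [lintegral_subtype_comap (measurableSet_singleton (0:E)).compl]
    _ = ∫⁻ x : ({0}ᶜ : Set E), g (homeomorphUnitSphereProd E x)
          ∂((volume : Measure E).comap (↑)) := by
        refine lintegral_congr fun x => ?_
        have hx : (x : E) ≠ 0 := x.2
        by_cases h : ‖(x:E)‖⁻¹ • (x:E) ∈ J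
        · rw [indicator_of_mem (show (x:E) ∈ cone J from ⟨hx, h⟩), hg_def]
          simp only [homeomorphUnitSphereProd_apply_fst_coe]
          rw [indicator_of_mem (by simpa using h)]
          simp
        · rw [indicator_of_notMem (fun hc => h hc.2), hg_def]
          simp only [homeomorphUnitSphereProd_apply_fst_coe]
          rw [indicator_of_notMem (by simpa using h)]
          simp
    _ = ∫⁻ p, g p ∂((volume : Measure E).toSphere.prod
          (Measure.volumeIoiPow (Module.finrank ℝ E - 1))) :=
        (Measure.measurePreserving_homeomorphUnitSphereProd volume).lintegral_comp hg
    _ = (∫⁻ ξ, ((↑) ⁻¹' J : Set (sphere (0 : E) 1)).indicator 1 ξ ∂(volume : Measure E).toSphere)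
          * ∫⁻ t : Ioi (0:ℝ), G t.1 ∂(Measure.volumeIoiPow (Module.finrank ℝ E - 1)) :=
        lintegral_prod_mul ((measurable_one.indicator hS)).aemeasurable
          (hG.comp measurable_subtype_coe).aemeasurable
    _ = _ := by rw [lintegral_indicator_one hS]

lemma toSphere_pos (hd : 1 ≤ d) {I : Set E} (hIne : I.Nonempty)
    (hIsub : I ⊆ sphere (0 : E) 1) {U : Set E} (hU : IsOpen U)
    (hIeq : I = U ∩ sphere (0 : E) 1) :
    0 < volume.toSphere ((↑) ⁻¹' I : Set (sphere (0 : E) 1)) := by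
  haveI : Nontrivial E := Module.nontrivial_of_finrank_pos (R := ℝ)
    (by rw [finrank_euclideanSpace_fin]; exact hd)
  have hImeas : MeasurableSet I := by
    rw [hIeq]; exact hU.measurableSet.inter (isClosed_sphere).measurableSet
  have hS : MeasurableSet ((↑) ⁻¹' I : Set (sphere (0 : E) 1)) :=
    measurable_subtype_coe hImeas
  rw [Measure.toSphere_apply' _ hS, Subtype.image_preimage_coe, inter_eq_right.2 hIsub]
  have hdim : (0:ℝ≥0∞) < Module.finrank ℝ E := by
    rw [finrank_euclideanSpace_fin]
    exact_mod_cast Nat.lt_of_lt_of_le Nat.zero_lt_one hd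
  refine ENNReal.mul_pos hdim.ne' ?_ |>.trans_le le_rfl
  -- positive volume of the open truncated cone
  set V : Set E := ball (0:E) 1 ∩ ({0}ᶜ ∩ (fun y : E => ‖y‖⁻¹ • y) ⁻¹' U) with hV_def
  have hVopen : IsOpen V := by
    refine isOpen_ball.inter ?_
    refine ContinuousOn.isOpen_inter_preimage ?_ isOpen_compl_singleton hU
    exact ((continuous_norm.continuousOn).inv₀ fun x hx => norm_ne_zero_iff.2 hx).smul
      continuousOn_id
  obtain ⟨ξ₀, hξ₀⟩ := hIne
  have hξ₀n : ‖ξ₀‖ = 1 := mem_sphere_zero_iff_norm.1 (hIsub hξ₀)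
  have hξ₀ne : ξ₀ ≠ 0 := by intro h; rw [h, norm_zero] at hξ₀n; norm_num at hξ₀n
  have hxV : ((2:ℝ)⁻¹ • ξ₀) ∈ V := by
    have hnorm : ‖(2:ℝ)⁻¹ • ξ₀‖ = 2⁻¹ := by
      rw [norm_smul, hξ₀n]; norm_num
    refine ⟨?_, ?_, ?_⟩
    · simp only [mem_ball, dist_zero_right, hnorm]; norm_num
    · simp only [mem_compl_iff, mem_singleton_iff]
      exact smul_ne_zero (by norm_num) hξ₀ne
    · show ‖(2:ℝ)⁻¹ • ξ₀‖⁻¹ • ((2:ℝ)⁻¹ • ξ₀) ∈ U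
      rw [hnorm, smul_smul]
      norm_num
      exact (hIeq ▸ hξ₀).1
  have hVsub : V ⊆ Ioo (0:ℝ) 1 • I := by
    rintro x ⟨hx1, hx2, hx3⟩
    have hxne : x ≠ 0 := hx2
    have hxnorm : ‖x‖ ∈ Ioo (0:ℝ) 1 := ⟨norm_pos_iff.2 hxne, by simpa [dist_zero_right] using hx1⟩
    refine Set.mem_smul.2 ⟨‖x‖, hxnorm, ‖x‖⁻¹ • x, ?_, ?_⟩
    · rw [hIeq]
      exact ⟨hx3, normalize_mem_sphere hxne⟩
    · rw [smul_smul, mul_inv_cancel₀ (norm_ne_zero_iff.2 hxne), one_smul]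
  exact ((hVopen.measure_pos volume ⟨_, hxV⟩).trans_le (measure_mono hVsub)).ne'

end Stmt18Aux


open MeasureTheory Topology Filter

/-- Lower bound used in the proof of Theorem 4.1: if `k` is bounded, symmetric,
measurable on the sphere and `k ≥ δ` on a nonempty relatively open subset `I` of the
sphere, and `k(h/|h|) γ(|h|) ≤ m(x,h) ≤ γ(|h|)`, then there is `c > 0` depending only on
`d`, `δ` and `I` with `∫_{|z-x₀| ≥ r} m(x₀, z-x₀) dz ≥ c ∫_{|z| ≥ r} γ(|z|) dz`. -/
theorem stmt_18 (d : ℕ) (hd : 1 ≤ d) (δ : ℝ) (hδ : 0 < δ)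
    (I : Set (EuclideanSpace ℝ (Fin d))) (hIne : I.Nonempty)
    (hIsub : I ⊆ Metric.sphere (0 : EuclideanSpace ℝ (Fin d)) 1)
    (hIopen : ∃ U : Set (EuclideanSpace ℝ (Fin d)), IsOpen U ∧
      I = U ∩ Metric.sphere (0 : EuclideanSpace ℝ (Fin d)) 1) :
    ∃ c : ℝ, 0 < c ∧
      ∀ k : EuclideanSpace ℝ (Fin d) → ℝ, Measurable k →
        (∀ ξ : EuclideanSpace ℝ (Fin d), ‖ξ‖ = 1 → 0 ≤ k ξ) →
        (∃ M : ℝ, ∀ ξ : EuclideanSpace ℝ (Fin d), ‖ξ‖ = 1 → k ξ ≤ M) →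
        (∀ ξ : EuclideanSpace ℝ (Fin d), ‖ξ‖ = 1 → k (-ξ) = k ξ) →
        (∀ ξ ∈ I, δ ≤ k ξ) →
        ∀ γ : ℝ → ℝ, Measurable γ → (∀ s : ℝ, 0 < s → 0 ≤ γ s) →
          (∀ s : ℝ, 0 < s → IntegrableOn (fun z : EuclideanSpace ℝ (Fin d) => γ ‖z‖)
            {z : EuclideanSpace ℝ (Fin d) | s < ‖z‖}) →
          ∀ m : EuclideanSpace ℝ (Fin d) → EuclideanSpace ℝ (Fin d) → ℝ,
            Measurable (Function.uncurry m) →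
            (∀ (x h : EuclideanSpace ℝ (Fin d)), h ≠ 0 →
              k (‖h‖⁻¹ • h) * γ ‖h‖ ≤ m x h ∧ m x h ≤ γ ‖h‖) →
            ∀ (x₀ : EuclideanSpace ℝ (Fin d)) (r : ℝ), 0 < r →
              c * (∫ z in {z : EuclideanSpace ℝ (Fin d) | r ≤ ‖z‖}, γ ‖z‖) ≤
                ∫ z in {z : EuclideanSpace ℝ (Fin d) | r ≤ ‖z - x₀‖}, m x₀ (z - x₀) := by
  obtain ⟨U, hU, hIeq⟩ := hIopen
  have hImeas : MeasurableSet I := by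
    rw [hIeq]; exact hU.measurableSet.inter Metric.isClosed_sphere.measurableSet
  set A := volume.toSphere
    ((↑) ⁻¹' I : Set (Metric.sphere (0 : EuclideanSpace ℝ (Fin d)) 1)) with hA_def
  set B := volume.toSphere
    (Set.univ : Set (Metric.sphere (0 : EuclideanSpace ℝ (Fin d)) 1)) with hB_def
  have hApos : 0 < A := Stmt18Aux.toSphere_pos hd hIne hIsub hU hIeq
  have hAB : A ≤ B := measure_mono (Set.subset_univ _)
  have hBfin : B ≠ ⊤ := measure_ne_top _ _
  have hAfin : A ≠ ⊤ := (lt_of_le_of_lt hAB hBfin.lt_top).ne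
  have hArpos : 0 < A.toReal := ENNReal.toReal_pos hApos.ne' hAfin
  have hBrpos : 0 < B.toReal := ENNReal.toReal_pos (hApos.trans_le hAB).ne' hBfin
  refine ⟨δ * (A.toReal / B.toReal), by positivity, ?_⟩
  intro k hk hk0 _ _ hkδ γ hγ hγ0 hγint m hm hmb x₀ r hr
  set S : Set (EuclideanSpace ℝ (Fin d)) := {z | r ≤ ‖z‖} with hS_def
  have hSmeas : MeasurableSet S := (isClosed_le continuous_const continuous_norm).measurableSet
  have hγS : IntegrableOn (fun z : EuclideanSpace ℝ (Fin d) => γ ‖z‖) S :=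
    (hγint (r/2) (by linarith)).mono_set (fun z hz => lt_of_lt_of_le (show r/2 < r by linarith) hz)
  have hnormpos : ∀ z ∈ S, (0:ℝ) < ‖z‖ := fun z hz => lt_of_lt_of_le hr hz
  have hne : ∀ z ∈ S, z ≠ (0 : EuclideanSpace ℝ (Fin d)) := by
    intro z hz h0
    have := hnormpos z hz
    rw [h0, norm_zero] at this
    exact lt_irrefl _ this
  have hmnonneg : ∀ z ∈ S, 0 ≤ m x₀ z ∧ m x₀ z ≤ γ ‖z‖ := by
    intro z hz
    obtain ⟨h1, h2⟩ := hmb x₀ z (hne z hz)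
    have hξ : ‖‖z‖⁻¹ • z‖ = 1 :=
      mem_sphere_zero_iff_norm.1 (Stmt18Aux.normalize_mem_sphere (hne z hz))
    exact ⟨le_trans (mul_nonneg (hk0 _ hξ) (hγ0 _ (hnormpos z hz))) h1, h2⟩
  have hmmeas : Measurable (m x₀) := hm.comp measurable_prodMk_left
  have hmS : IntegrableOn (m x₀) S := by
    refine Integrable.mono hγS hmmeas.aestronglyMeasurable ?_
    filter_upwards [ae_restrict_mem hSmeas] with z hz
    rw [Real.norm_eq_abs, Real.norm_eq_abs, abs_of_nonneg (hmnonneg z hz).1]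
    exact le_trans (hmnonneg z hz).2 (le_abs_self _)
  have htrans : ∫ z in {z : EuclideanSpace ℝ (Fin d) | r ≤ ‖z - x₀‖}, m x₀ (z - x₀)
      = ∫ z in S, m x₀ z := by
    have hmp : MeasurePreserving (fun h : EuclideanSpace ℝ (Fin d) => h + x₀) volume volume :=
      measurePreserving_add_right volume x₀
    have h6 := hmp.setIntegral_preimage_emb (Homeomorph.addRight x₀).measurableEmbedding
      (fun z => m x₀ (z - x₀)) {z | r ≤ ‖z - x₀‖}
    rw [← h6]
    have hset : (fun h : EuclideanSpace ℝ (Fin d) => h + x₀) ⁻¹' {z | r ≤ ‖z - x₀‖} = S := by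
      ext h; simp [hS_def, add_sub_cancel_right]
    rw [hset]
    simp only [add_sub_cancel_right]
  set Gγ : ℝ → ℝ≥0∞ := fun t => (Set.Ici r).indicator (fun t => ENNReal.ofReal (γ t)) t
    with hGγ_def
  have hGγmeas : Measurable Gγ := (ENNReal.measurable_ofReal.comp hγ).indicator measurableSet_Ici
  set R := ∫⁻ t : Set.Ioi (0:ℝ), Gγ t.1
    ∂(Measure.volumeIoiPow (Module.finrank ℝ (EuclideanSpace ℝ (Fin d)) - 1)) with hR_def
  have h1 := Stmt18Aux.polar hd (Set.univ) MeasurableSet.univ Gγ hGγmeas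
  rw [Set.preimage_univ] at h1
  have hXpolar : ∫⁻ z in S, ENNReal.ofReal (γ ‖z‖) = B * R := by
    rw [← lintegral_indicator hSmeas, ← h1]
    refine lintegral_congr fun z => ?_
    by_cases hz : z = (0 : EuclideanSpace ℝ (Fin d))
    · rw [Set.indicator_of_notMem (by simp [hS_def, hz]; linarith),
        Set.indicator_of_notMem (fun hc => hc.1 hz)]
    · by_cases hzr : r ≤ ‖z‖
      · rw [Set.indicator_of_mem (show z ∈ S from hzr),
          Set.indicator_of_mem (show z ∈ Stmt18Aux.cone Set.univ from ⟨hz, Set.mem_univ _⟩)]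
        exact (Set.indicator_of_mem (show ‖z‖ ∈ Set.Ici r from hzr) (fun t => ENNReal.ofReal (γ t))).symm
      · rw [Set.indicator_of_notMem (show z ∉ S from hzr),
          Set.indicator_of_mem (show z ∈ Stmt18Aux.cone Set.univ from ⟨hz, Set.mem_univ _⟩)]
        exact (Set.indicator_of_notMem (show ‖z‖ ∉ Set.Ici r from hzr) (fun t => ENNReal.ofReal (γ t))).symm
  have hXof : ENNReal.ofReal (∫ z in S, γ ‖z‖) = ∫⁻ z in S, ENNReal.ofReal (γ ‖z‖) :=
    ofReal_integral_eq_lintegral_ofReal hγS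
      (by filter_upwards [ae_restrict_mem hSmeas] with z hz; exact hγ0 _ (hnormpos z hz))
  have hYnn : 0 ≤ ∫ z in S, m x₀ z :=
    setIntegral_nonneg hSmeas fun z hz => (hmnonneg z hz).1
  have hXnn : 0 ≤ ∫ z in S, γ ‖z‖ :=
    setIntegral_nonneg hSmeas fun z hz => hγ0 _ (hnormpos z hz)
  have hYof : ENNReal.ofReal (∫ z in S, m x₀ z) = ∫⁻ z in S, ENNReal.ofReal (m x₀ z) :=
    ofReal_integral_eq_lintegral_ofReal hmS
      (by filter_upwards [ae_restrict_mem hSmeas] with z hz; exact (hmnonneg z hz).1)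
  have hLleX : ∫⁻ z in S, ENNReal.ofReal (m x₀ z) ≤ ∫⁻ z in S, ENNReal.ofReal (γ ‖z‖) :=
    setLIntegral_mono (ENNReal.measurable_ofReal.comp (hγ.comp measurable_norm))
      fun z hz => ENNReal.ofReal_le_ofReal (hmnonneg z hz).2
  have hXfin : ∫⁻ z in S, ENNReal.ofReal (γ ‖z‖) ≠ ⊤ := hXof ▸ ENNReal.ofReal_ne_top
  have h3 := Stmt18Aux.polar hd I hImeas (fun t => ENNReal.ofReal δ * Gγ t)
    (measurable_const.mul hGγmeas)
  have hR2 : (∫⁻ t : Set.Ioi (0:ℝ), ENNReal.ofReal δ * Gγ t.1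
      ∂(Measure.volumeIoiPow (Module.finrank ℝ (EuclideanSpace ℝ (Fin d)) - 1)))
      = ENNReal.ofReal δ * R :=
    lintegral_const_mul' _ _ ENNReal.ofReal_ne_top
  have h3' : ∫⁻ x, (Stmt18Aux.cone I).indicator
      (fun y => ENNReal.ofReal δ * Gγ ‖y‖) x = A * (ENNReal.ofReal δ * R) := by
    rw [hA_def, ← hR2]
    exact h3
  have hKle : A * (ENNReal.ofReal δ * R) ≤ ∫⁻ z in S, ENNReal.ofReal (m x₀ z) := by
    rw [← h3', ← lintegral_indicator hSmeas]
    refine lintegral_mono fun z => ?_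
    by_cases hzc : z ∈ Stmt18Aux.cone I
    · have hz0 := hzc.1
      have hzI := hzc.2
      rw [Set.indicator_of_mem hzc]
      show ENNReal.ofReal δ * Gγ ‖z‖ ≤ _
      by_cases hzr : r ≤ ‖z‖
      · rw [Set.indicator_of_mem (show z ∈ S from hzr)]
        show _ ≤ ENNReal.ofReal (m x₀ z)
        have hGz : Gγ ‖z‖ = ENNReal.ofReal (γ ‖z‖) :=
          Set.indicator_of_mem (show ‖z‖ ∈ Set.Ici r from hzr) (fun t => ENNReal.ofReal (γ t))
        rw [hGz, ← ENNReal.ofReal_mul hδ.le]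
        refine ENNReal.ofReal_le_ofReal ?_
        have hγnn : 0 ≤ γ ‖z‖ := hγ0 _ (lt_of_lt_of_le hr hzr)
        calc δ * γ ‖z‖ ≤ k (‖z‖⁻¹ • z) * γ ‖z‖ :=
              mul_le_mul_of_nonneg_right (hkδ _ hzI) hγnn
          _ ≤ m x₀ z := (hmb x₀ z hz0).1
      · have hGz : Gγ ‖z‖ = 0 :=
          Set.indicator_of_notMem (show ‖z‖ ∉ Set.Ici r from hzr) (fun t => ENNReal.ofReal (γ t))
        rw [hGz, mul_zero]
        exact zero_le
    · rw [Set.indicator_of_notMem hzc]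
      exact zero_le
  have hRfin : R ≠ ⊤ := by
    intro hR
    apply hXfin
    rw [hXpolar, hR, ENNReal.mul_top (hApos.trans_le hAB).ne']
  have hXval : ∫ z in S, γ ‖z‖ = B.toReal * R.toReal := by
    have h7 : (ENNReal.ofReal (∫ z in S, γ ‖z‖)).toReal = (B * R).toReal := by
      rw [hXof, hXpolar]
    rwa [ENNReal.toReal_ofReal hXnn, ENNReal.toReal_mul] at h7
  have hYge : A.toReal * (δ * R.toReal) ≤ ∫ z in S, m x₀ z := by
    have h5 : (A * (ENNReal.ofReal δ * R)).toReal
        ≤ (ENNReal.ofReal (∫ z in S, m x₀ z)).toReal := by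
      refine ENNReal.toReal_mono ENNReal.ofReal_ne_top ?_
      rw [hYof]; exact hKle
    rwa [ENNReal.toReal_mul, ENNReal.toReal_mul, ENNReal.toReal_ofReal hδ.le,
      ENNReal.toReal_ofReal hYnn] at h5
  rw [htrans, hXval]
  have harith : δ * (A.toReal / B.toReal) * (B.toReal * R.toReal)
      = A.toReal * (δ * R.toReal) := by
    field_simp
  rw [harith]
  exact hYge
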